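/- In the polynomial algebra ℚ[x]/(x²) (x in even degree) consider H = (ℚ[x]/(x²))^{⊗s} and the element z = (∑_{i=1}^{s−1} 1⊗···⊗x⊗···⊗1 (x in position i)) − (s−1)·1⊗···⊗1⊗x. Then z^s = (1−s)·s!·(x⊗x⊗···⊗x), which is nonzero for s ≥ 2. -/

import Mathlib

set_option maxHeartbeats 1000000
set_option synthInstance.maxHeartbeats 400000

open scoped TensorProduct

/-- The element `1 ⊗ ··· ⊗ x ⊗ ··· ⊗ 1` (with `x` in position `i`) of
`(ℚ[x]/(x²))^{⊗s}`, the latter modelled as the `s`-fold tensor power of the dual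
numbers `ℚ[x]/(x²) = DualNumber ℚ`. -/
noncomputable def xAt (s : ℕ) (i : Fin s) : ⨂[ℚ] (_ : Fin s), DualNumber ℚ :=
  PiTensorProduct.tprod ℚ (Function.update (fun _ => (1 : DualNumber ℚ)) i DualNumber.eps)

noncomputable instance tensTower (s : ℕ) :
    IsScalarTower ℚ (⨂[ℚ] (_ : Fin s), DualNumber ℚ) (⨂[ℚ] (_ : Fin s), DualNumber ℚ) :=
  ⟨fun r x y => by
    show (r • x) * y = r • (x * y)
    rw [PiTensorProduct.mul_def, PiTensorProduct.mul_def, map_smul, LinearMap.smul_apply]⟩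

noncomputable instance tensComm (s : ℕ) :
    SMulCommClass ℚ (⨂[ℚ] (_ : Fin s), DualNumber ℚ) (⨂[ℚ] (_ : Fin s), DualNumber ℚ) :=
  ⟨fun r x y => by
    show r • (x * y) = x * (r • y)
    rw [PiTensorProduct.mul_def, PiTensorProduct.mul_def, map_smul]⟩

lemma prod_smul'' {ι : Type*} {M : Type*} {α : Type*} [CommMonoid M] [CommMonoid α]
    [MulAction α M] [IsScalarTower α M M] [SMulCommClass α M M]
    (t : Finset ι) (b : ι → α) (f : ι → M) :
    ∏ i ∈ t, b i • f i = (∏ i ∈ t, b i) • ∏ i ∈ t, f i := by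
  induction t using Finset.cons_induction_on with
  | empty => simp
  | cons _ _ hj ih =>
    rw [Finset.prod_cons, Finset.prod_cons, Finset.prod_cons, ih, smul_mul_smul_comm]

lemma xAt_sq (s : ℕ) (i : Fin s) : xAt s i * xAt s i = 0 := by
  rw [xAt, PiTensorProduct.tprod_mul_tprod]
  have h : (Function.update (fun _ => (1 : DualNumber ℚ)) i DualNumber.eps *
      Function.update (fun _ => (1 : DualNumber ℚ)) i DualNumber.eps) =
      Function.update (fun _ => (1 : DualNumber ℚ)) i 0 := by
    funext j
    by_cases hj : j = i
    · subst hj; simp [DualNumber.eps_mul_eps]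
    · simp [Function.update_apply, hj]
  rw [h]
  exact (PiTensorProduct.tprod ℚ).map_update_zero _ _

lemma prod_xAt (s : ℕ) : (∏ i : Fin s, xAt s i) =
    PiTensorProduct.tprod ℚ (fun _ : Fin s => DualNumber.eps) := by
  have h := map_prod (PiTensorProduct.tprodMonoidHom (A := fun _ : Fin s => DualNumber ℚ) ℚ)
    (fun i : Fin s => Function.update (fun _ => (1 : DualNumber ℚ)) i DualNumber.eps) Finset.univ
  rw [show (∏ i : Fin s, xAt s i) =
      PiTensorProduct.tprod ℚ
        (∏ i : Fin s, Function.update (fun _ => (1 : DualNumber ℚ)) i DualNumber.eps) from h.symm]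
  congr 1
  funext j
  rw [Finset.prod_apply]
  rw [Finset.prod_eq_single j (fun i _ hij => by
    simp [Function.update_apply, (Ne.symm hij : j ≠ i)]) (by simp)]
  simp

/-- The linear functional extracting the coefficient of `x ⊗ ··· ⊗ x`. -/
noncomputable def epsCoeff (s : ℕ) : (⨂[ℚ] (_ : Fin s), DualNumber ℚ) →ₗ[ℚ] ℚ :=
  PiTensorProduct.lift
    ((MultilinearMap.mkPiAlgebra ℚ (Fin s) ℚ).compLinearMap
      (fun _ => TrivSqZeroExt.sndHom ℚ ℚ))

lemma epsCoeff_tprod_eps (s : ℕ) :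
    epsCoeff s (PiTensorProduct.tprod ℚ (fun _ : Fin s => DualNumber.eps)) = 1 := by
  rw [epsCoeff, PiTensorProduct.lift.tprod]
  simp only [MultilinearMap.compLinearMap_apply, MultilinearMap.mkPiAlgebra_apply,
    TrivSqZeroExt.sndHom_apply, DualNumber.eps, TrivSqZeroExt.snd_inr]
  simp

/-- For `z = (∑_{i=1}^{s-1} 1 ⊗ ··· ⊗ x ⊗ ··· ⊗ 1) − (s−1)·(1 ⊗ ··· ⊗ 1 ⊗ x)` in
`(ℚ[x]/(x²))^{⊗s}` (`x` of even degree), `z^s = (1−s)·s!·(x ⊗ ··· ⊗ x)`, which is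
nonzero for `s ≥ 2`. -/
theorem stmt_17 (s : ℕ) (hs : 2 ≤ s) :
    (∑ i : Fin s, (if i.val = s - 1 then -((s : ℚ) - 1) else 1) • xAt s i) ^ s =
      ((1 - (s : ℚ)) * s.factorial) •
        PiTensorProduct.tprod ℚ (fun _ : Fin s => DualNumber.eps) ∧
    (∑ i : Fin s, (if i.val = s - 1 then -((s : ℚ) - 1) else 1) • xAt s i) ^ s ≠ 0 := by
  set c : Fin s → ℚ := fun i => if i.val = s - 1 then -((s : ℚ) - 1) else 1 with hc
  have key : (∑ i : Fin s, c i • xAt s i) ^ s =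
      ((1 - (s : ℚ)) * s.factorial) •
        PiTensorProduct.tprod ℚ (fun _ : Fin s => DualNumber.eps) := by
    have hexp := Finset.sum_pow_eq_sum_piAntidiag Finset.univ (fun i => c i • xAt s i) s
    rw [hexp]
    have h1mem : (fun _ : Fin s => 1) ∈ Finset.piAntidiag Finset.univ s := by
      simp
    rw [Finset.sum_eq_single_of_mem _ h1mem]
    · -- main term
      have hmult : Nat.multinomial Finset.univ (fun _ : Fin s => 1) = s.factorial := by
        simp [Nat.multinomial]
      have hprod : (∏ i : Fin s, (c i • xAt s i) ^ (1 : ℕ)) =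
          (∏ i : Fin s, c i) • ∏ i : Fin s, xAt s i := by
        simp only [pow_one]
        exact prod_smul'' Finset.univ c (fun i => xAt s i)
      have hc_prod : (∏ i : Fin s, c i) = 1 - (s : ℚ) := by
        have hlt : s - 1 < s := by omega
        rw [Finset.prod_eq_single (⟨s - 1, hlt⟩ : Fin s)
          (fun i _ hi => by
            simp only [hc]
            exact if_neg (fun h => hi (Fin.ext h)))
          (by simp)]
        simp [hc, neg_sub]
      rw [hmult, hprod, hc_prod, prod_xAt]
      rw [← nsmul_eq_mul, ← Nat.cast_smul_eq_nsmul ℚ, smul_smul]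
      ring_nf
    · -- other terms vanish
      intro k hk hne
      obtain ⟨i, hi⟩ : ∃ i : Fin s, 2 ≤ k i := by
        by_contra hnone
        push_neg at hnone
        apply hne
        funext i
        have hle : ∀ j ∈ Finset.univ, k j ≤ (fun _ : Fin s => 1) j :=
          fun j _ => by have := hnone j; show k j ≤ 1; omega
        have hsum : ∑ j : Fin s, k j = ∑ j : Fin s, (fun _ : Fin s => 1) j := by
          rw [(Finset.mem_piAntidiag.mp hk).1]
          simp
        exact ((Finset.sum_eq_sum_iff_of_le hle).mp hsum i (Finset.mem_univ i))
      have hz : (c i • xAt s i) ^ (k i) = 0 := by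
        rw [smul_pow]
        have : xAt s i ^ (k i) = 0 := by
          refine pow_eq_zero_of_le hi ?_
          rw [pow_two]; exact xAt_sq s i
        rw [this, smul_zero]
      rw [Finset.prod_eq_zero (f := fun j => (c j • xAt s j) ^ k j) (Finset.mem_univ i) hz,
        mul_zero]
  refine ⟨key, ?_⟩
  rw [key]
  intro h
  have := congrArg (epsCoeff s) h
  rw [LinearMap.map_smul, epsCoeff_tprod_eps, LinearMap.map_zero, smul_eq_mul, mul_one] at this
  have hs1 : (1 - (s : ℚ)) ≠ 0 := by
    have h2 : (2 : ℚ) ≤ (s : ℚ) := by exact_mod_cast hs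
    intro h'; nlinarith
  have hf : ((s.factorial : ℚ)) ≠ 0 := by
    exact_mod_cast s.factorial_ne_zero
  exact (mul_ne_zero hs1 hf) this
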